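/- Let C be a class of graphs that is closed under the addition of universal vertices. Then no graph in M_C contains a universal vertex. Moreover, for any two nonisomorphic graphs H1, H2 ∈ M_C, the graphs 2K1 ∨ H1 and 2K1 ∨ H2 are incomparable with respect to the induced minor relation (neither is an induced minor of the other). -/

import Mathlib

open SimpleGraph

namespace PaperSep

variable {V : Type} {W : Type}

/-- There is a walk from `a` to `b` in `G` all of whose vertices avoid the set `S`. -/
def ConnAvoid (G : SimpleGraph V) (S : Set V) (a b : V) : Prop :=
  ∃ p : G.Walk a b, ∀ v ∈ p.support, v ∉ S

/-- `S` is an `(a,b)`-separator of `G`. -/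
def IsSep (G : SimpleGraph V) (a b : V) (S : Set V) : Prop :=
  a ∉ S ∧ b ∉ S ∧ ¬ ConnAvoid G S a b

/-- `S` is a minimal `(a,b)`-separator of `G`. -/
def IsMinSep (G : SimpleGraph V) (a b : V) (S : Set V) : Prop :=
  IsSep G a b S ∧ ∀ T ⊂ S, ¬ IsSep G a b T

/-- `S` is a minimal separator of `G`. -/
def IsMinimalSeparator (G : SimpleGraph V) (S : Set V) : Prop :=
  ∃ a b : V, a ≠ b ∧ ¬ G.Adj a b ∧ IsMinSep G a b S

/-- `K` is a cutset of `G`, i.e. `G − K` is disconnected. -/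
def IsCutset (G : SimpleGraph V) (K : Set V) : Prop :=
  ∃ a b : V, a ∉ K ∧ b ∉ K ∧ ¬ ConnAvoid G K a b

/-- `K` is a minimal cutset of `G`. -/
def IsMinimalCutset (G : SimpleGraph V) (K : Set V) : Prop :=
  IsCutset G K ∧ ∀ T ⊂ K, ¬ IsCutset G T

/-- A class of finite graphs. -/
def GraphClass : Type 1 :=
  ∀ (α : Type) [Finite α], SimpleGraph α → Prop

/-- A class is hereditary if it is closed under isomorphism and induced subgraphs. -/
def Hereditary (C : GraphClass) : Prop :=
  ∀ (α : Type) [Finite α] (G : SimpleGraph α) (β : Type) [Finite β] (H : SimpleGraph β)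
    (s : Set α), Nonempty (H ≃g G.induce s) → C α G → C β H

/-- `G ∈ 𝒢_C` : every minimal separator of `G` induces a graph in `C`. -/
def MemGC (C : GraphClass) {α : Type} [Finite α] (G : SimpleGraph α) : Prop :=
  ∀ S : Set α, IsMinimalSeparator G S → C ↥S (G.induce S)

/-- The class `𝒢_C`. -/
def GCclass (C : GraphClass) : GraphClass :=
  fun α inst G => @MemGC C α inst G

/-- `S` is a union of `k` (possibly empty) cliques of `G`. -/
def UnionOfCliques (G : SimpleGraph V) (k : ℕ) (S : Set V) : Prop :=
  ∃ f : Fin k → Set V, (∀ i, G.IsClique (f i)) ∧ S = ⋃ i, f i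

/-- `G ∈ 𝒢_k` : every minimal separator of `G` is a union of `k` cliques. -/
def MemGk (k : ℕ) (G : SimpleGraph V) : Prop :=
  ∀ S : Set V, IsMinimalSeparator G S → UnionOfCliques G k S

/-- The class `𝒢_k`. -/
def Gkclass (k : ℕ) : GraphClass := fun _ _ G => MemGk k G

/-- The class `𝒞_k` of graphs whose vertex set is a union of `k` cliques. -/
def Ckclass (k : ℕ) : GraphClass := fun _ _ G => UnionOfCliques G k Set.univ

/-- An induced minor model of `H` in `G`. -/
def IsIMModel (G : SimpleGraph V) (H : SimpleGraph W) (X : W → Set V) : Prop :=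
  (∀ w, (X w).Nonempty) ∧
  (∀ u w : W, u ≠ w → Disjoint (X u) (X w)) ∧
  (∀ w, (G.induce (X w)).Connected) ∧
  (∀ u w : W, u ≠ w → (H.Adj u w ↔ ∃ a ∈ X u, ∃ b ∈ X w, G.Adj a b))

/-- `H` is an induced minor of `G`. -/
def IsInducedMinor (H : SimpleGraph W) (G : SimpleGraph V) : Prop :=
  ∃ X : W → Set V, IsIMModel G H X

/-- The class `C` is closed under induced minors. -/
def IMClosed (C : GraphClass) : Prop :=
  ∀ (α : Type) [Finite α] (G : SimpleGraph α) (β : Type) [Finite β] (H : SimpleGraph β),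
    C α G → IsInducedMinor H G → C β H

/-- The class `C` is closed under the addition of edges. -/
def EdgeAddClosed (C : GraphClass) : Prop :=
  ∀ (α : Type) [Finite α] (G : SimpleGraph α) (a b : α), a ≠ b → ¬ G.Adj a b →
    C α G → C α (G ⊔ SimpleGraph.edge a b)

/-- `G ∈ ℳ_C` : `G ∉ C` but every proper induced minor of `G` is in `C`.
(For finite graphs, the proper induced minors of `G` are exactly the induced minors of `G`
not isomorphic to `G`.) -/
def MemMC (C : GraphClass) {α : Type} [Finite α] (G : SimpleGraph α) : Prop :=
  ¬ C α G ∧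
  ∀ (β : Type) [Finite β] (H : SimpleGraph β),
    IsInducedMinor H G → IsEmpty (H ≃g G) → C β H

/-- The complete join of two graphs. -/
def join (G : SimpleGraph V) (H : SimpleGraph W) : SimpleGraph (V ⊕ W) :=
  SimpleGraph.fromRel (fun x y =>
    match x, y with
    | Sum.inl a, Sum.inl b => G.Adj a b
    | Sum.inr a, Sum.inr b => H.Adj a b
    | _, _ => True)

/-- The class `C` is closed under the addition of universal vertices (up to isomorphism). -/
def UnivAddClosed (C : GraphClass) : Prop :=
  ∀ (α : Type) [Finite α] (G : SimpleGraph α) (β : Type) [Finite β] (H : SimpleGraph β),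
    C α G → Nonempty (H ≃g join (⊥ : SimpleGraph (Fin 1)) G) → C β H

/-- `G` has a universal vertex. -/
def HasUniversalVertex (G : SimpleGraph V) : Prop :=
  ∃ v : V, ∀ w : V, w ≠ v → G.Adj v w



/-- `G` is a theta: two nonadjacent vertices joined by three internally disjoint induced
paths of length at least two, with no other vertices or edges
(equivalently, a subdivision of `K_{2,3}`). -/
def IsTheta (G : SimpleGraph V) : Prop :=
  ∃ (a b : V) (P₁ P₂ P₃ : G.Walk a b),
    a ≠ b ∧
    P₁.IsPath ∧ P₂.IsPath ∧ P₃.IsPath ∧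
    2 ≤ P₁.length ∧ 2 ≤ P₂.length ∧ 2 ≤ P₃.length ∧
    (∀ v : V, v ∈ P₁.support → v ∈ P₂.support → v = a ∨ v = b) ∧
    (∀ v : V, v ∈ P₁.support → v ∈ P₃.support → v = a ∨ v = b) ∧
    (∀ v : V, v ∈ P₂.support → v ∈ P₃.support → v = a ∨ v = b) ∧
    (∀ v : V, v ∈ P₁.support ∨ v ∈ P₂.support ∨ v ∈ P₃.support) ∧
    (∀ u v : V, G.Adj u v ↔
      s(u, v) ∈ P₁.edges ∨ s(u, v) ∈ P₂.edges ∨ s(u, v) ∈ P₃.edges)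

/-- `G` is a pyramid: an apex `a` joined to a triangle `b₁b₂b₃` by three paths sharing only
`a`, at least two of which have length at least two, with no other vertices or edges. -/
def IsPyramid (G : SimpleGraph V) : Prop :=
  ∃ (a b₁ b₂ b₃ : V) (P₁ : G.Walk a b₁) (P₂ : G.Walk a b₂) (P₃ : G.Walk a b₃),
    G.Adj b₁ b₂ ∧ G.Adj b₁ b₃ ∧ G.Adj b₂ b₃ ∧
    P₁.IsPath ∧ P₂.IsPath ∧ P₃.IsPath ∧
    1 ≤ P₁.length ∧ 1 ≤ P₂.length ∧ 1 ≤ P₃.length ∧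
    ((2 ≤ P₁.length ∧ 2 ≤ P₂.length) ∨ (2 ≤ P₁.length ∧ 2 ≤ P₃.length) ∨
      (2 ≤ P₂.length ∧ 2 ≤ P₃.length)) ∧
    (∀ v : V, v ∈ P₁.support → v ∈ P₂.support → v = a) ∧
    (∀ v : V, v ∈ P₁.support → v ∈ P₃.support → v = a) ∧
    (∀ v : V, v ∈ P₂.support → v ∈ P₃.support → v = a) ∧
    (∀ v : V, v ∈ P₁.support ∨ v ∈ P₂.support ∨ v ∈ P₃.support) ∧
    (∀ u v : V, G.Adj u v ↔
      s(u, v) ∈ P₁.edges ∨ s(u, v) ∈ P₂.edges ∨ s(u, v) ∈ P₃.edges ∨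
      s(u, v) = s(b₁, b₂) ∨ s(u, v) = s(b₁, b₃) ∨ s(u, v) = s(b₂, b₃))

/-- `G` is a prism: two disjoint triangles joined by three pairwise disjoint paths, with no
other vertices or edges. -/
def IsPrism (G : SimpleGraph V) : Prop :=
  ∃ (a₁ a₂ a₃ b₁ b₂ b₃ : V) (P₁ : G.Walk a₁ b₁) (P₂ : G.Walk a₂ b₂) (P₃ : G.Walk a₃ b₃),
    G.Adj a₁ a₂ ∧ G.Adj a₁ a₃ ∧ G.Adj a₂ a₃ ∧
    G.Adj b₁ b₂ ∧ G.Adj b₁ b₃ ∧ G.Adj b₂ b₃ ∧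
    P₁.IsPath ∧ P₂.IsPath ∧ P₃.IsPath ∧
    1 ≤ P₁.length ∧ 1 ≤ P₂.length ∧ 1 ≤ P₃.length ∧
    (∀ v : V, v ∈ P₁.support → v ∈ P₂.support → False) ∧
    (∀ v : V, v ∈ P₁.support → v ∈ P₃.support → False) ∧
    (∀ v : V, v ∈ P₂.support → v ∈ P₃.support → False) ∧
    (∀ v : V, v ∈ P₁.support ∨ v ∈ P₂.support ∨ v ∈ P₃.support) ∧
    (∀ u v : V, G.Adj u v ↔
      s(u, v) ∈ P₁.edges ∨ s(u, v) ∈ P₂.edges ∨ s(u, v) ∈ P₃.edges ∨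
      s(u, v) = s(a₁, a₂) ∨ s(u, v) = s(a₁, a₃) ∨ s(u, v) = s(a₂, a₃) ∨
      s(u, v) = s(b₁, b₂) ∨ s(u, v) = s(b₁, b₃) ∨ s(u, v) = s(b₂, b₃))

/-- `G` is a long prism: a prism other than the complement of `C₆`, i.e. a prism in which at
least one of the three paths has length at least two. -/
def IsLongPrism (G : SimpleGraph V) : Prop :=
  ∃ (a₁ a₂ a₃ b₁ b₂ b₃ : V) (P₁ : G.Walk a₁ b₁) (P₂ : G.Walk a₂ b₂) (P₃ : G.Walk a₃ b₃),
    G.Adj a₁ a₂ ∧ G.Adj a₁ a₃ ∧ G.Adj a₂ a₃ ∧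
    G.Adj b₁ b₂ ∧ G.Adj b₁ b₃ ∧ G.Adj b₂ b₃ ∧
    P₁.IsPath ∧ P₂.IsPath ∧ P₃.IsPath ∧
    1 ≤ P₁.length ∧ 1 ≤ P₂.length ∧ 1 ≤ P₃.length ∧
    (2 ≤ P₁.length ∨ 2 ≤ P₂.length ∨ 2 ≤ P₃.length) ∧
    (∀ v : V, v ∈ P₁.support → v ∈ P₂.support → False) ∧
    (∀ v : V, v ∈ P₁.support → v ∈ P₃.support → False) ∧
    (∀ v : V, v ∈ P₂.support → v ∈ P₃.support → False) ∧
    (∀ v : V, v ∈ P₁.support ∨ v ∈ P₂.support ∨ v ∈ P₃.support) ∧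
    (∀ u v : V, G.Adj u v ↔
      s(u, v) ∈ P₁.edges ∨ s(u, v) ∈ P₂.edges ∨ s(u, v) ∈ P₃.edges ∨
      s(u, v) = s(a₁, a₂) ∨ s(u, v) = s(a₁, a₃) ∨ s(u, v) = s(a₂, a₃) ∨
      s(u, v) = s(b₁, b₂) ∨ s(u, v) = s(b₁, b₃) ∨ s(u, v) = s(b₂, b₃))

/-- `G` is a wheel: a hole (chordless cycle of length at least four) together with one
additional vertex having at least three neighbors on the hole. -/
def IsWheel (G : SimpleGraph V) : Prop :=
  ∃ (v x : V) (c : G.Walk x x),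
    c.IsCycle ∧ 4 ≤ c.length ∧ v ∉ c.support ∧
    (∀ u : V, u = v ∨ u ∈ c.support) ∧
    (∀ u w : V, u ∈ c.support → w ∈ c.support → G.Adj u w → s(u, w) ∈ c.edges) ∧
    3 ≤ {u : V | u ∈ c.support ∧ G.Adj v u}.ncard

/-- `G` is a broken wheel: a wheel in which the neighbors of the additional vertex induce a
disconnected subgraph of the hole. -/
def IsBrokenWheel (G : SimpleGraph V) : Prop :=
  ∃ (v x : V) (c : G.Walk x x),
    c.IsCycle ∧ 4 ≤ c.length ∧ v ∉ c.support ∧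
    (∀ u : V, u = v ∨ u ∈ c.support) ∧
    (∀ u w : V, u ∈ c.support → w ∈ c.support → G.Adj u w → s(u, w) ∈ c.edges) ∧
    3 ≤ {u : V | u ∈ c.support ∧ G.Adj v u}.ncard ∧
    ¬ (G.induce {u : V | u ∈ c.support ∧ G.Adj v u}).Connected

/-- `G` is diamond-free: it has no induced subgraph isomorphic to `K₄` minus an edge. -/
def DiamondFree (G : SimpleGraph V) : Prop :=
  ¬ ∃ a b c d : V, c ≠ d ∧ G.Adj a b ∧ G.Adj a c ∧ G.Adj a d ∧ G.Adj b c ∧ G.Adj b d ∧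
    ¬ G.Adj c d

/-- The short `n`-prism: two `n`-vertex cliques joined by a perfect matching. -/
def completePrism (n : ℕ) : SimpleGraph (Fin n ⊕ Fin n) :=
  SimpleGraph.fromRel (fun x y =>
    match x, y with
    | Sum.inl _, Sum.inl _ => True
    | Sum.inr _, Sum.inr _ => True
    | Sum.inl i, Sum.inr j => i = j
    | Sum.inr i, Sum.inl j => i = j)

/-- `G` is a complete prism, i.e. a short `n`-prism for some `n ≥ 3`. -/
def IsCompletePrism (G : SimpleGraph V) : Prop :=
  ∃ n : ℕ, 3 ≤ n ∧ Nonempty (G ≃g completePrism n)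

/-- `G` is a cycle. -/
def IsCycleGraph (G : SimpleGraph V) : Prop :=
  ∃ n : ℕ, 3 ≤ n ∧ Nonempty (G ≃g cycleGraph n)

/-- `G` is a complete graph. -/
def IsCompleteGraph (G : SimpleGraph V) : Prop :=
  ∀ u v : V, u ≠ v → G.Adj u v

/-- `G` has a clique-cutset. -/
def HasCliqueCutset (G : SimpleGraph V) : Prop :=
  ∃ K : Set V, G.IsClique K ∧ IsCutset G K




section Statement7Aux

open Sum Function

lemma jbot_adj_inl_inl {ι V : Type} {H : SimpleGraph V} (i j : ι) :
    ¬ (join (⊥ : SimpleGraph ι) H).Adj (Sum.inl i) (Sum.inl j) := by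
  simp [join, SimpleGraph.fromRel_adj]

lemma jbot_adj_inl_inr {ι V : Type} {H : SimpleGraph V} (i : ι) (w : V) :
    (join (⊥ : SimpleGraph ι) H).Adj (Sum.inl i) (Sum.inr w) := by
  simp [join, SimpleGraph.fromRel_adj]

lemma jbot_adj_inr_inl {ι V : Type} {H : SimpleGraph V} (i : ι) (w : V) :
    (join (⊥ : SimpleGraph ι) H).Adj (Sum.inr w) (Sum.inl i) := by
  simp [join, SimpleGraph.fromRel_adj]

lemma jbot_adj_inr_inr {ι V : Type} {H : SimpleGraph V} (a b : V) :
    (join (⊥ : SimpleGraph ι) H).Adj (Sum.inr a) (Sum.inr b) ↔ H.Adj a b := by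
  constructor
  · intro h
    rw [join, SimpleGraph.fromRel_adj] at h
    rcases h.2 with h' | h'
    · exact h'
    · exact h'.symm
  · intro h
    rw [join, SimpleGraph.fromRel_adj]
    exact ⟨by simpa using h.ne, Or.inl h⟩

lemma eq_inl_of_not_adj {W : Type} {H : SimpleGraph W} {i : Fin 2} {y : Fin 2 ⊕ W}
    (h : ¬ (join (⊥ : SimpleGraph (Fin 2)) H).Adj (Sum.inl i) y) :
    y = Sum.inl 0 ∨ y = Sum.inl 1 := by
  cases y with
  | inl j => fin_cases j <;> simp
  | inr w => exact absurd (jbot_adj_inl_inr i w) h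

/-- The induced subgraph of `join ⊥ H` on a set of `inr`-vertices is isomorphic to the
corresponding induced subgraph of `H`. -/
noncomputable def induceImageIso {W : Type} (H : SimpleGraph W) (T : Set W) :
    H.induce T ≃g (join (⊥ : SimpleGraph (Fin 2)) H).induce (Sum.inr '' T) where
  toEquiv := Equiv.Set.image Sum.inr T Sum.inr_injective
  map_rel_iff' := by
    intro a b
    simp only [SimpleGraph.comap_adj, Function.Embedding.coe_subtype, Equiv.Set.image_apply]
    exact jbot_adj_inr_inr _ _

lemma connected_preimage {W : Type} {H : SimpleGraph W} {S : Set (Fin 2 ⊕ W)}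
    (hS : S ⊆ Set.range Sum.inr)
    (h : ((join (⊥ : SimpleGraph (Fin 2)) H).induce S).Connected) :
    (H.induce (Sum.inr ⁻¹' S)).Connected := by
  rw [(induceImageIso H (Sum.inr ⁻¹' S)).connected_iff]
  rwa [Set.image_preimage_eq_of_subset hS]

lemma model_transfer {V W : Type} {H1 : SimpleGraph V} {H2 : SimpleGraph W}
    {X : Fin 2 ⊕ V → Set (Fin 2 ⊕ W)}
    (hM : IsIMModel (join (⊥ : SimpleGraph (Fin 2)) H2) (join (⊥ : SimpleGraph (Fin 2)) H1) X)
    (τ : V → Fin 2 ⊕ V) (hτ : Function.Injective τ)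
    (hrange : ∀ v, X (τ v) ⊆ Set.range Sum.inr)
    (hadjτ : ∀ v v' : V, v ≠ v' →
      (H1.Adj v v' ↔ (join (⊥ : SimpleGraph (Fin 2)) H1).Adj (τ v) (τ v'))) :
    IsInducedMinor H1 H2 := by
  obtain ⟨hne, hdisj, hconn, hadj⟩ := hM
  refine ⟨fun v => Sum.inr ⁻¹' X (τ v), ?_, ?_, ?_, ?_⟩
  · intro v
    obtain ⟨x, hx⟩ := hne (τ v)
    obtain ⟨w, rfl⟩ := hrange v hx
    exact ⟨w, hx⟩
  · intro u v huv
    exact (hdisj (τ u) (τ v) (hτ.ne huv)).preimage _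
  · intro v
    exact connected_preimage (hrange v) (hconn (τ v))
  · intro u v huv
    rw [hadjτ u v huv, hadj (τ u) (τ v) (hτ.ne huv)]
    constructor
    · rintro ⟨a, ha, b, hb, hab⟩
      obtain ⟨wa, rfl⟩ := hrange u ha
      obtain ⟨wb, rfl⟩ := hrange v hb
      exact ⟨wa, ha, wb, hb, (jbot_adj_inr_inr _ _).mp hab⟩
    · rintro ⟨wa, ha, wb, hb, hab⟩
      exact ⟨_, ha, _, hb, (jbot_adj_inr_inr _ _).mpr hab⟩

lemma im_of_join_im {V W : Type} {H1 : SimpleGraph V} {H2 : SimpleGraph W}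
    (hnu : ¬ HasUniversalVertex H1)
    (h : IsInducedMinor (join (⊥ : SimpleGraph (Fin 2)) H1)
      (join (⊥ : SimpleGraph (Fin 2)) H2)) :
    IsInducedMinor H1 H2 := by
  classical
  obtain ⟨X, hM⟩ := h
  obtain ⟨hne, hdisj, hconn, hadj⟩ := hM
  have hnu' : ∀ v : V, ∃ w, w ≠ v ∧ ¬ H1.Adj v w := by
    intro v
    by_contra hc
    push_neg at hc
    exact hnu ⟨v, hc⟩
  have mem_unique : ∀ {z z' : Fin 2 ⊕ V} {x : Fin 2 ⊕ W}, z ≠ z' → x ∈ X z → x ∈ X z' → False := by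
    intro z z' x hzz hx hx'
    exact Set.disjoint_left.mp (hdisj z z' hzz) hx hx'
  have noedge : ∀ {z z' : Fin 2 ⊕ V}, z ≠ z' →
      ¬ (join (⊥ : SimpleGraph (Fin 2)) H1).Adj z z' →
      ∀ x ∈ X z, ∀ y ∈ X z', ¬ (join (⊥ : SimpleGraph (Fin 2)) H2).Adj x y := by
    intro z z' hzz hnadj x hx y hy hA
    exact hnadj ((hadj z z' hzz).mpr ⟨x, hx, y, hy, hA⟩)
  by_cases h1 : ∃ v1, (Sum.inl 0 : Fin 2 ⊕ W) ∈ X (Sum.inr v1)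
  · obtain ⟨v1, hb1⟩ := h1
    obtain ⟨v0, hv01, hnadj10⟩ := hnu' v1
    have hne10 : (Sum.inr v1 : Fin 2 ⊕ V) ≠ Sum.inr v0 := by simpa using Ne.symm hv01
    have hJn : ¬ (join (⊥ : SimpleGraph (Fin 2)) H1).Adj (Sum.inr v1) (Sum.inr v0) := by
      rw [jbot_adj_inr_inr]; exact hnadj10
    have hb2 : (Sum.inl 1 : Fin 2 ⊕ W) ∈ X (Sum.inr v0) := by
      obtain ⟨y, hy⟩ := hne (Sum.inr v0)
      rcases eq_inl_of_not_adj (noedge hne10 hJn _ hb1 y hy) with rfl | rfl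
      · exact (mem_unique hne10 hb1 hy).elim
      · exact hy
    have hadj1 : ∀ v, v ≠ v1 → v ≠ v0 → H1.Adj v1 v := by
      intro v hvv1 hvv0
      by_contra hna
      have hnev : (Sum.inr v1 : Fin 2 ⊕ V) ≠ Sum.inr v := by simpa using Ne.symm hvv1
      have hJn' : ¬ (join (⊥ : SimpleGraph (Fin 2)) H1).Adj (Sum.inr v1) (Sum.inr v) := by
        rw [jbot_adj_inr_inr]; exact hna
      obtain ⟨y, hy⟩ := hne (Sum.inr v)
      rcases eq_inl_of_not_adj (noedge hnev hJn' _ hb1 y hy) with rfl | rfl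
      · exact mem_unique hnev hb1 hy
      · exact mem_unique (show (Sum.inr v0 : Fin 2 ⊕ V) ≠ Sum.inr v by simpa using Ne.symm hvv0)
          hb2 hy
    have hadj0 : ∀ v, v ≠ v1 → v ≠ v0 → H1.Adj v0 v := by
      intro v hvv1 hvv0
      by_contra hna
      have hnev : (Sum.inr v0 : Fin 2 ⊕ V) ≠ Sum.inr v := by simpa using Ne.symm hvv0
      have hJn' : ¬ (join (⊥ : SimpleGraph (Fin 2)) H1).Adj (Sum.inr v0) (Sum.inr v) := by
        rw [jbot_adj_inr_inr]; exact hna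
      obtain ⟨y, hy⟩ := hne (Sum.inr v)
      rcases eq_inl_of_not_adj (noedge hnev hJn' _ hb2 y hy) with rfl | rfl
      · exact mem_unique (show (Sum.inr v1 : Fin 2 ⊕ V) ≠ Sum.inr v by simpa using Ne.symm hvv1)
          hb1 hy
      · exact mem_unique hnev hb2 hy
    set τ : V → Fin 2 ⊕ V :=
      fun v => if v = v1 then Sum.inl 0 else if v = v0 then Sum.inl 1 else Sum.inr v with hτ
    have τ1 : τ v1 = Sum.inl 0 := by simp [hτ]
    have τ0 : τ v0 = Sum.inl 1 := by simp [hτ, hv01]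
    have τo : ∀ v, v ≠ v1 → v ≠ v0 → τ v = Sum.inr v := by
      intro v hA hB; simp [hτ, hA, hB]
    refine model_transfer ⟨hne, hdisj, hconn, hadj⟩ τ ?_ ?_ ?_
    · intro a b hab
      have h01 : (Sum.inl 0 : Fin 2 ⊕ V) ≠ Sum.inl 1 :=
        fun h => absurd (Sum.inl_injective h) (by decide)
      rcases eq_or_ne a v1 with hA' | hA
      · rcases eq_or_ne b v1 with hC' | hC
        · exact hA'.trans hC'.symm
        · rcases eq_or_ne b v0 with hD' | hD
          · rw [hA', hD', τ1, τ0] at hab; exact absurd hab h01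
          · rw [hA', τ1, τo b hC hD] at hab; exact absurd hab (by simp)
      · rcases eq_or_ne a v0 with hB' | hB
        · rcases eq_or_ne b v1 with hC' | hC
          · rw [hB', hC', τ0, τ1] at hab; exact absurd hab h01.symm
          · rcases eq_or_ne b v0 with hD' | hD
            · exact hB'.trans hD'.symm
            · rw [hB', τ0, τo b hC hD] at hab; exact absurd hab (by simp)
        · rcases eq_or_ne b v1 with hC' | hC
          · rw [hC', τo a hA hB, τ1] at hab; exact absurd hab (by simp)
          · rcases eq_or_ne b v0 with hD' | hD
            · rw [hD', τo a hA hB, τ0] at hab; exact absurd hab (by simp)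
            · rw [τo a hA hB, τo b hC hD] at hab; exact Sum.inr_injective hab
    · intro v x hx
      rcases x with i | w
      · exfalso
        fin_cases i
        · refine mem_unique (z := τ v) (z' := Sum.inr v1) ?_ hx hb1
          rcases eq_or_ne v v1 with hA' | hA
          · rw [hA', τ1]; simp
          · rcases eq_or_ne v v0 with hB' | hB
            · rw [hB', τ0]; simp
            · rw [τo v hA hB]; simpa using hA
        · refine mem_unique (z := τ v) (z' := Sum.inr v0) ?_ hx hb2
          rcases eq_or_ne v v1 with hA' | hA
          · rw [hA', τ1]; simp
          · rcases eq_or_ne v v0 with hB' | hB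
            · rw [hB', τ0]; simp
            · rw [τo v hA hB]; simpa using hB
      · exact ⟨w, rfl⟩
    · intro v v' hvv'
      rcases eq_or_ne v v1 with hA' | hA
      · have hv'1 : v' ≠ v1 := fun h => hvv' (hA'.trans h.symm)
        rcases eq_or_ne v' v0 with hD' | hD
        · rw [hA', hD', τ1, τ0]
          exact iff_of_false hnadj10 (jbot_adj_inl_inl _ _)
        · rw [hA', τ1, τo v' hv'1 hD]
          exact iff_of_true (hadj1 v' hv'1 hD) (jbot_adj_inl_inr _ _)
      · rcases eq_or_ne v v0 with hB' | hB
        · have hv'0 : v' ≠ v0 := fun h => hvv' (hB'.trans h.symm)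
          rcases eq_or_ne v' v1 with hC' | hC
          · rw [hB', hC', τ0, τ1]
            exact iff_of_false (fun h => hnadj10 h.symm) (jbot_adj_inl_inl _ _)
          · rw [hB', τ0, τo v' hC hv'0]
            exact iff_of_true (hadj0 v' hC hv'0) (jbot_adj_inl_inr _ _)
        · rcases eq_or_ne v' v1 with hC' | hC
          · rw [hC', τo v hA hB, τ1]
            exact iff_of_true ((hadj1 v hA hB).symm) (jbot_adj_inr_inl _ _)
          · rcases eq_or_ne v' v0 with hD' | hD
            · rw [hD', τo v hA hB, τ0]
              exact iff_of_true ((hadj0 v hA hB).symm) (jbot_adj_inr_inl _ _)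
            · rw [τo v hA hB, τo v' hC hD]
              exact (jbot_adj_inr_inr _ _).symm
  · by_cases h2 : ∃ v, (Sum.inl 1 : Fin 2 ⊕ W) ∈ X (Sum.inr v)
    · exfalso
      obtain ⟨v, hb2⟩ := h2
      obtain ⟨v0, hv0, hnadj'⟩ := hnu' v
      have hnev : (Sum.inr v : Fin 2 ⊕ V) ≠ Sum.inr v0 := by simpa using Ne.symm hv0
      have hJn : ¬ (join (⊥ : SimpleGraph (Fin 2)) H1).Adj (Sum.inr v) (Sum.inr v0) := by
        rw [jbot_adj_inr_inr]; exact hnadj'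
      obtain ⟨y, hy⟩ := hne (Sum.inr v0)
      rcases eq_inl_of_not_adj (noedge hnev hJn _ hb2 y hy) with rfl | rfl
      · exact h1 ⟨v0, hy⟩
      · exact mem_unique hnev hb2 hy
    · refine model_transfer ⟨hne, hdisj, hconn, hadj⟩ Sum.inr Sum.inr_injective ?_ ?_
      · intro v x hx
        rcases x with i | w
        · exfalso
          fin_cases i
          · exact h1 ⟨v, hx⟩
          · exact h2 ⟨v, hx⟩
        · exact ⟨w, rfl⟩
      · intro v v' _
        exact (jbot_adj_inr_inr _ _).symm

lemma no_universal {V : Type} [Finite V] (C : GraphClass) (hU : UnivAddClosed C)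
    (G : SimpleGraph V) (hG : MemMC C G) : ¬ HasUniversalVertex G := by
  classical
  rintro ⟨v, hv⟩
  set s : Set V := {w | w ≠ v} with hs
  have hIM : IsInducedMinor (G.induce s) G := by
    refine ⟨fun w => {(w : V)}, fun w => ⟨w, rfl⟩, ?_, ?_, ?_⟩
    · intro u w huw
      exact Set.disjoint_singleton.mpr (fun h => huw (Subtype.coe_injective h))
    · intro w
      rw [SimpleGraph.induce_singleton_eq_top]
      have : Nonempty ({(w : V)} : Set V) := ⟨⟨w, rfl⟩⟩
      exact SimpleGraph.connected_top
    · intro u w huw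
      simp
  have hniso : IsEmpty ((G.induce s) ≃g G) := by
    constructor
    intro e
    have hf : Function.Injective (fun x : V => ((e.toEquiv.symm x : ↥s) : V)) :=
      Subtype.coe_injective.comp e.toEquiv.symm.injective
    obtain ⟨x, hx⟩ := (Finite.injective_iff_surjective.mp hf) v
    exact (e.toEquiv.symm x).2 hx
  have hC : C ↥s (G.induce s) := hG.2 ↥s (G.induce s) hIM hniso
  have hiso : Nonempty (G ≃g join (⊥ : SimpleGraph (Fin 1)) (G.induce s)) := by
    refine ⟨⟨⟨fun x => if h : x = v then Sum.inl 0 else Sum.inr ⟨x, h⟩,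
      Sum.elim (fun _ => v) (fun w => (w : V)), ?_, ?_⟩, ?_⟩⟩
    · intro x
      by_cases h : x = v
      · simp [h]
      · simp [h]
    · rintro (i | w)
      · simp only [Sum.elim_inl, dif_pos]
        exact (dif_pos rfl).trans (congrArg Sum.inl (Subsingleton.elim _ _))
      · have hw : (w : V) ≠ v := w.2
        simp [hw]
    · intro a b
      dsimp only [Equiv.coe_fn_mk]
      by_cases ha : a = v
      · by_cases hb : b = v
        · rw [dif_pos ha, dif_pos hb]
          refine iff_of_false (jbot_adj_inl_inl _ _) ?_
          rintro h
          rw [ha, hb] at h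
          exact G.irrefl h
        · rw [dif_pos ha, dif_neg hb]
          refine iff_of_true (jbot_adj_inl_inr _ _) ?_
          rw [ha]
          exact hv b hb
      · by_cases hb : b = v
        · rw [dif_neg ha, dif_pos hb]
          refine iff_of_true (jbot_adj_inr_inl _ _) ?_
          rw [hb]
          exact (hv a ha).symm
        · rw [dif_neg ha, dif_neg hb, jbot_adj_inr_inr]
          exact Iff.rfl
  exact hG.1 (hU ↥s (G.induce s) V G hC hiso)

end Statement7Aux

/-- if `C` is closed under the addition of universal vertices, then no
graph in `ℳ_C` has a universal vertex, and for nonisomorphic `H₁, H₂ ∈ ℳ_C` the graphs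
`2K₁ ∨ H₁` and `2K₁ ∨ H₂` are incomparable under the induced minor relation. -/
theorem statement_7 (C : GraphClass) (hU : UnivAddClosed C) :
    (∀ (V : Type) [Finite V] (G : SimpleGraph V), MemMC C G → ¬ HasUniversalVertex G) ∧
    (∀ (V : Type) [Finite V] (H₁ : SimpleGraph V)
       (W : Type) [Finite W] (H₂ : SimpleGraph W),
      MemMC C H₁ → MemMC C H₂ → IsEmpty (H₁ ≃g H₂) →
      ¬ IsInducedMinor (join (⊥ : SimpleGraph (Fin 2)) H₁)
          (join (⊥ : SimpleGraph (Fin 2)) H₂) ∧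
      ¬ IsInducedMinor (join (⊥ : SimpleGraph (Fin 2)) H₂)
          (join (⊥ : SimpleGraph (Fin 2)) H₁)) := by
  constructor
  · intro V _ G hG
    exact no_universal C hU G hG
  · intro V _ H₁ W _ H₂ h1 h2 hiso
    have hnu1 := no_universal C hU H₁ h1
    have hnu2 := no_universal C hU H₂ h2
    constructor
    · intro h
      exact h1.1 (h2.2 V H₁ (im_of_join_im hnu1 h) hiso)
    · intro h
      exact h2.1 (h1.2 W H₂ (im_of_join_im hnu2 h) ⟨fun e => hiso.false e.symm⟩)

end PaperSep
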